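/- The bijective and-pointer number of an undirected graph equals its maximum degree. -/
import Mathlib


/-- The bijective and-pointer number of `G` is at most `k`: there are a bijective
id-labeling `ι : V → [n]` and `ℓ : V → [n]^k` such that distinct `u, v` are
adjacent iff `ι u` occurs in `ℓ v` and `ι v` occurs in `ℓ u`. -/
def BijAndPtrLe {n : ℕ} (G : SimpleGraph (Fin n)) (k : ℕ) : Prop :=
  ∃ (ι : Fin n ≃ Fin n) (ℓ : Fin n → Fin k → Fin n),
    ∀ u v : Fin n, u ≠ v →
      (G.Adj u v ↔ (∃ i, ℓ v i = ι u) ∧ (∃ i, ℓ u i = ι v))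

lemma bijAndPtrLe_maxDegree {n : ℕ} (G : SimpleGraph (Fin n)) [DecidableRel G.Adj] :
    BijAndPtrLe G G.maxDegree := by
  classical
  refine ⟨Equiv.refl _, fun v i => ((G.neighborFinset v).toList).getD i v, ?_⟩
  have key : ∀ u v : Fin n, u ≠ v →
      ((∃ i : Fin G.maxDegree, ((G.neighborFinset v).toList).getD i v = u) ↔ G.Adj v u) := by
    intro u v huv
    constructor
    · rintro ⟨i, hi⟩
      by_cases h : (i : ℕ) < ((G.neighborFinset v).toList).length
      · have : u ∈ (G.neighborFinset v).toList := by
          rw [List.getD_eq_getElem _ _ h] at hi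
          rw [← hi]; exact List.getElem_mem h
        rw [Finset.mem_toList, SimpleGraph.mem_neighborFinset] at this
        exact this
      · rw [List.getD_eq_default _ _ (not_lt.mp h)] at hi
        exact absurd hi.symm huv
    · intro hadj
      have hmem : u ∈ (G.neighborFinset v).toList := by
        rw [Finset.mem_toList, SimpleGraph.mem_neighborFinset]; exact hadj
      obtain ⟨j, hj, hget⟩ := List.mem_iff_getElem.mp hmem
      have hlen : ((G.neighborFinset v).toList).length ≤ G.maxDegree := by
        rw [Finset.length_toList]
        exact G.degree_le_maxDegree v
      exact ⟨⟨j, lt_of_lt_of_le hj hlen⟩, by rw [List.getD_eq_getElem _ _ hj]; exact hget⟩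
  intro u v huv
  simp only [Equiv.refl_apply]
  rw [key u v huv, key v u huv.symm]
  constructor
  · intro h; exact ⟨h.symm, h⟩
  · intro h; exact h.2

lemma maxDegree_le_of_bijAndPtrLe {n : ℕ} (G : SimpleGraph (Fin n)) [DecidableRel G.Adj]
    {k : ℕ} (h : BijAndPtrLe G k) : G.maxDegree ≤ k := by
  classical
  obtain ⟨ι, ℓ, hrep⟩ := h
  apply SimpleGraph.maxDegree_le_of_forall_degree_le
  intro u
  rw [SimpleGraph.degree]
  have hex : ∀ v ∈ G.neighborFinset u, ∃ i : Fin k, ℓ u i = ι v := by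
    intro v hv
    rw [SimpleGraph.mem_neighborFinset] at hv
    exact ((hrep u v (G.ne_of_adj hv)).mp hv).2
  choose f hf using hex
  have hinj : Function.Injective (fun v : {v // v ∈ G.neighborFinset u} => f v.1 v.2) := by
    intro v w hvw
    have : ι v.1 = ι w.1 := by rw [← hf v.1 v.2, ← hf w.1 w.2]; exact congrArg (ℓ u) hvw
    exact Subtype.ext (ι.injective this)
  calc (G.neighborFinset u).card = Fintype.card {v // v ∈ G.neighborFinset u} :=
        (Fintype.card_coe _).symm
    _ ≤ Fintype.card (Fin k) := Fintype.card_le_of_injective _ hinj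
    _ = k := Fintype.card_fin k

/-- The bijective and-pointer number of an undirected graph (the least `k` such
that `G` has a bijective and-pointer representation with `k` pointers) equals its
maximum degree. -/
theorem stmt_6 (n : ℕ) (G : SimpleGraph (Fin n)) [DecidableRel G.Adj] :
    sInf {k | BijAndPtrLe G k} = G.maxDegree := by
  apply le_antisymm
  · exact Nat.sInf_le (bijAndPtrLe_maxDegree G)
  · have hmem : G.maxDegree ∈ {k | BijAndPtrLe G k} := bijAndPtrLe_maxDegree G
    exact maxDegree_le_of_bijAndPtrLe G (Nat.sInf_mem ⟨_, hmem⟩)
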